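/- Let r, s ∈ ℂ^× and let φ(x) = Σ_{i=0}^{n} a_i x^i ∈ ℂ[x]. If s ≠ r^j for every 0 ≤ j ≤ n, then there exists a polynomial ψ ∈ ℂ[x] with s·ψ(x) − ψ(r·x) = φ(x). More generally, if for every 0 ≤ j ≤ n with s = r^j one has a_j = 0, then such a ψ exists. -/
import Mathlib


open Polynomial

theorem stmt11 (r s : ℂ) (hr : r ≠ 0) (hs : s ≠ 0) (n : ℕ) (φ : ℂ[X])
    (hφ : φ.natDegree ≤ n)
    (h : ∀ j ≤ n, s = r ^ j → φ.coeff j = 0) :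
    ∃ ψ : ℂ[X], C s * ψ - ψ.comp (C r * X) = φ := by
  refine ⟨∑ j ∈ Finset.range (n+1), C (φ.coeff j / (s - r ^ j)) * X ^ j, ?_⟩
  rw [Finset.mul_sum, Polynomial.sum_comp, ← Finset.sum_sub_distrib]
  have key : ∀ j ∈ Finset.range (n+1),
      C s * (C (φ.coeff j / (s - r ^ j)) * X ^ j)
        - (C (φ.coeff j / (s - r ^ j)) * X ^ j).comp (C r * X)
      = C (φ.coeff j) * X ^ j := by
    intro j hj
    rw [Finset.mem_range, Nat.lt_succ_iff] at hj
    rw [mul_comp, C_comp, pow_comp, X_comp, mul_pow, ← C_pow,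
      show C s * (C (φ.coeff j / (s - r ^ j)) * X ^ j)
          - C (φ.coeff j / (s - r ^ j)) * (C (r ^ j) * X ^ j)
        = C ((s - r ^ j) * (φ.coeff j / (s - r ^ j))) * X ^ j from by
          rw [C_mul, C_sub]; ring]
    congr 1
    by_cases hsr : s = r ^ j
    · rw [h j hj hsr]
      ring
    · congr 1
      rw [mul_comm, div_mul_cancel₀ _ (sub_ne_zero.mpr hsr)]
  rw [Finset.sum_congr rfl key]
  simp only [C_mul_X_pow_eq_monomial]
  exact (φ.as_sum_range' (n+1) (Nat.lt_succ_of_le hφ)).symm
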